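/- Let θ > 0 and y > 0 with y ≠ θ. Then the partial derivative of the Hill function with respect to y, namely ∂H/∂y(y, θ, q) = θ^{1/q} y^{1/q − 1} / ( q (y^{1/q} + θ^{1/q})² ), converges to 0 as q → 0⁺. -/

import Mathlib

open Filter Set

lemma hill_aux_exp (b : ℝ) (hb : b < 0) :
    Tendsto (fun t : ℝ => t * Real.exp (b * t)) atTop (nhds 0) := by
  have hb' : 0 < -b := by linarith
  have h1 : Tendsto (fun s : ℝ => s ^ 1 * Real.exp (-s)) atTop (nhds 0) :=
    Real.tendsto_pow_mul_exp_neg_atTop_nhds_zero 1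
  have h2 : Tendsto (fun t : ℝ => -b * t) atTop atTop :=
    tendsto_id.const_mul_atTop hb'
  have h3 := (h1.comp h2).const_mul (-b)⁻¹
  rw [mul_zero] at h3
  refine h3.congr fun t => ?_
  simp only [Function.comp_apply, pow_one]
  have hbne : b ≠ 0 := ne_of_lt hb
  field_simp

lemma hill_aux (c : ℝ) (hc0 : 0 < c) (hc1 : c < 1) :
    Tendsto (fun q : ℝ => c ^ (1 / q) / q) (nhdsWithin 0 (Ioi 0)) (nhds 0) := by
  have hb : Real.log c < 0 := Real.log_neg hc0 hc1
  have h1 : Tendsto (fun q : ℝ => q⁻¹) (nhdsWithin (0:ℝ) (Ioi 0)) atTop :=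
    tendsto_inv_nhdsGT_zero
  have h2 := (hill_aux_exp (Real.log c) hb).comp h1
  refine h2.congr fun q => ?_
  simp only [Function.comp_apply]
  rw [one_div, Real.rpow_def_of_pos hc0, div_eq_mul_inv, mul_comm]

/-- for y ≠ θ, the partial derivative of the Hill function,
∂H/∂y(y, θ, q) = θ^(1/q) y^(1/q−1) / (q (y^(1/q) + θ^(1/q))²), tends to 0 as
q → 0⁺. -/
theorem hill_deriv_tendsto_zero (θ y : ℝ) (hθ : 0 < θ) (hy : 0 < y) (hne : y ≠ θ) :
    Tendsto
      (fun q : ℝ => θ ^ (1 / q) * y ^ (1 / q - 1) /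
        (q * (y ^ (1 / q) + θ ^ (1 / q)) ^ 2))
      (nhdsWithin 0 (Ioi 0)) (nhds 0) := by
  set M : ℝ := max y θ with hM
  have hM0 : 0 < M := lt_max_of_lt_left hy
  set c : ℝ := θ * y / M ^ 2 with hc
  have hc0 : 0 < c := by positivity
  have hc1 : c < 1 := by
    rw [hc, div_lt_one (by positivity)]
    rcases lt_or_gt_of_ne hne with h | h
    · have hθM : M = θ := max_eq_right h.le
      rw [hθM]; nlinarith
    · have hyM : M = y := max_eq_left h.le
      rw [hyM]; nlinarith
  have key := (hill_aux c hc0 hc1).const_mul y⁻¹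
  rw [mul_zero] at key
  refine squeeze_zero' ?_ ?_ key
  · filter_upwards [self_mem_nhdsWithin] with q (hq : 0 < q)
    positivity
  · filter_upwards [self_mem_nhdsWithin] with q (hq : 0 < q)
    have hS : 0 < y ^ (1/q) + θ ^ (1/q) := by positivity
    have hMle : M ^ (1/q) ≤ y ^ (1/q) + θ ^ (1/q) := by
      rcases max_cases y θ with ⟨h1, h2⟩ | ⟨h1, h2⟩ <;> rw [hM, h1]
      · nlinarith [Real.rpow_pos_of_pos hθ (1/q)]
      · nlinarith [Real.rpow_pos_of_pos hy (1/q)]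
    have hnum : θ ^ (1/q) * y ^ (1/q - 1) = θ ^ (1/q) * y ^ (1/q) / y := by
      rw [Real.rpow_sub hy, Real.rpow_one, mul_div_assoc]
    have hnumpos : (0:ℝ) ≤ θ ^ (1/q) * y ^ (1/q - 1) := by positivity
    have hden : q * (M ^ (1/q)) ^ 2 ≤ q * (y ^ (1/q) + θ ^ (1/q)) ^ 2 := by
      have := pow_le_pow_left₀ (le_of_lt (Real.rpow_pos_of_pos hM0 (1/q))) hMle 2
      nlinarith
    have hdpos : 0 < q * (M ^ (1/q)) ^ 2 := by positivity
    calc θ ^ (1/q) * y ^ (1/q - 1) / (q * (y ^ (1/q) + θ ^ (1/q)) ^ 2)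
        ≤ θ ^ (1/q) * y ^ (1/q - 1) / (q * (M ^ (1/q)) ^ 2) :=
          div_le_div_of_nonneg_left hnumpos hdpos hden
      _ = y⁻¹ * (c ^ (1/q) / q) := by
          rw [hnum, hc, Real.div_rpow (by positivity) (by positivity),
            Real.mul_rpow hθ.le hy.le, ← Real.rpow_natCast M 2,
            ← Real.rpow_mul hM0.le, ← Real.rpow_natCast (M ^ (1/q)) 2,
            ← Real.rpow_mul hM0.le, mul_comm (1/q) ((2:ℕ):ℝ)]
          have h1 : M ^ (((2:ℕ):ℝ) * (1/q)) ≠ 0 := (Real.rpow_pos_of_pos hM0 _).ne'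
          field_simp
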